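/- Shapiro's theorem (relation case, one direction): if R ⊆ ℕ is a set that is neither finite nor cofinite, then there exists a bijection σ : ℕ → ℕ such that the σ-preimage of R, namely {n : σ(n) ∈ R}, is not computable. -/

import Mathlib

open Computable

private lemma finset_computable (F : Finset ℕ) : ComputablePred fun n => n ∈ F := by
  classical
  induction F using Finset.induction_on with
  | empty =>
      exact ComputablePred.computable_iff.2 ⟨fun _ => false, Computable.const false, by simp⟩
  | @insert a F _ ih =>
      obtain ⟨f, hf, hfe⟩ := ComputablePred.computable_iff.1 ih
      refine ComputablePred.computable_iff.2
        ⟨fun n => bif decide (n = a) then true else f n,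
         Computable.cond ((Primrec.eq.decide.comp .id (.const a)).to_comp) (Computable.const true) hf,
         ?_⟩
      funext n
      by_cases h : n = a <;> simp [h, Finset.mem_insert, hfe]

private lemma set_finite_computable {s : Set ℕ} (hs : s.Finite) :
    ComputablePred fun n => n ∈ s := by
  classical
  have := finset_computable hs.toFinset
  exact this.of_eq fun n => by simp

/-- Shapiro's theorem, relation case, one direction: if `R ⊆ ℕ` is neither finite
nor cofinite, then there is a bijection (notation) `σ : ℕ → ℕ` in which `R` is not
computable, i.e. the `σ`-preimage of `R` is not a computable set. -/
theorem stmt_9 (R : Set ℕ) (h1 : ¬ R.Finite) (h2 : ¬ Rᶜ.Finite) :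
    ∃ σ : ℕ → ℕ, Function.Bijective σ ∧ ¬ ComputablePred fun n : ℕ => σ n ∈ R := by
  classical
  -- the halting set
  set H : Set ℕ :=
    {n | (Nat.Partrec.Code.eval (Denumerable.ofNat Nat.Partrec.Code n) 0).Dom} with hHdef
  have hHnc : ¬ ComputablePred fun n => n ∈ H := by
    intro h
    apply ComputablePred.halting_problem 0
    obtain ⟨f, hf, hfe⟩ := ComputablePred.computable_iff.1 h
    refine ComputablePred.computable_iff.2
      ⟨fun c => f (Encodable.encode c), hf.comp Computable.encode, ?_⟩
    funext c
    have h2 := congrFun hfe (Encodable.encode c)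
    rw [← h2]
    simp [hHdef, H, Denumerable.ofNat_encode]
  have hHinf : ¬ H.Finite := fun h => hHnc (set_finite_computable h)
  have hHcinf : ¬ Hᶜ.Finite := by
    intro h
    apply hHnc
    have := (set_finite_computable h).not
    exact this.of_eq fun n => by simp
  -- infinite instances
  haveI : Infinite ↥H := Set.infinite_coe_iff.2 hHinf
  haveI : Infinite ↥Hᶜ := Set.infinite_coe_iff.2 hHcinf
  haveI : Infinite ↥R := Set.infinite_coe_iff.2 h1
  haveI : Infinite ↥Rᶜ := Set.infinite_coe_iff.2 h2
  obtain ⟨e1⟩ : Nonempty (↥H ≃ ↥R) := nonempty_equiv_of_countable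
  obtain ⟨e2⟩ : Nonempty (↥Hᶜ ≃ ↥Rᶜ) := nonempty_equiv_of_countable
  let e : ℕ ≃ ℕ :=
    (Equiv.Set.sumCompl H).symm.trans ((e1.sumCongr e2).trans (Equiv.Set.sumCompl R))
  have key : ∀ n, e n ∈ R ↔ n ∈ H := by
    intro n
    by_cases hn : n ∈ H
    · have : e n = ↑(e1 ⟨n, hn⟩) := by
        simp [e, Equiv.Set.sumCompl_symm_apply_of_mem hn]
      rw [this]
      exact iff_of_true (e1 ⟨n, hn⟩).2 hn
    · have : e n = ↑(e2 ⟨n, hn⟩) := by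
        simp [e, Equiv.Set.sumCompl_symm_apply_of_notMem hn]
      rw [this]
      have := (e2 ⟨n, hn⟩).2
      simp only [Set.mem_compl_iff] at this
      simp [this, hn]
  refine ⟨e, e.bijective, ?_⟩
  intro hcomp
  exact hHnc (hcomp.of_eq key)
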